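/- Let γ be a periodic orbit of period T > 0 of the C¹ planar system ẋ = P, ẏ = Q, and let x = F(u,v), y = G(u,v) be a C² diffeomorphic change of variables defined on a neighborhood of γ with nonvanishing Jacobian J, transforming the system into u̇ = R, v̇ = S with corresponding periodic orbit ϑ. Then ∫₀ᵀ (∂P/∂x + ∂Q/∂y)(γ(t)) dt = ∫₀ᵀ (∂R/∂u + ∂S/∂v)(ϑ(t)) dt. -/

import Mathlib

lemma clm_expand (φ : ℝ × ℝ →L[ℝ] ℝ) (x y : ℝ) :
    φ (x, y) = x * φ (1, 0) + y * φ (0, 1) := by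
  have : (x, y) = x • ((1:ℝ), (0:ℝ)) + y • ((0:ℝ), (1:ℝ)) := by
    simp [Prod.ext_iff]
  rw [this, map_add, map_smul, map_smul, smul_eq_mul, smul_eq_mul]

lemma clm2_expand (φ : ℝ × ℝ →L[ℝ] (ℝ × ℝ →L[ℝ] ℝ)) (x y : ℝ) (v : ℝ × ℝ) :
    φ (x, y) v = x * φ (1, 0) v + y * φ (0, 1) v := by
  have : (x, y) = x • ((1:ℝ), (0:ℝ)) + y • ((0:ℝ), (1:ℝ)) := by
    simp [Prod.ext_iff]
  rw [this, map_add, map_smul, map_smul]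
  simp [ContinuousLinearMap.add_apply]

lemma curve_comp1 {V : Set (ℝ × ℝ)} (hV : IsOpen V) {R : ℝ × ℝ → ℝ}
    (hR : ContDiffOn ℝ 1 R V) {c : ℝ → ℝ × ℝ} {vel : ℝ × ℝ} {t : ℝ}
    (hc : HasDerivAt c vel t) (hp : c t ∈ V) :
    HasDerivAt (fun s => R (c s)) (fderiv ℝ R (c t) vel) t := by
  have hdiff : DifferentiableAt ℝ R (c t) :=
    (hR.differentiableOn one_ne_zero).differentiableAt (hV.mem_nhds hp)
  exact hdiff.hasFDerivAt.comp_hasDerivAt t hc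

lemma curve_fderiv {V : Set (ℝ × ℝ)} (hV : IsOpen V) {F : ℝ × ℝ → ℝ}
    (hF : ContDiffOn ℝ 2 F V) {c : ℝ → ℝ × ℝ} {vel : ℝ × ℝ} {t : ℝ}
    (hc : HasDerivAt c vel t) (hp : c t ∈ V) (w : ℝ × ℝ) :
    HasDerivAt (fun s => fderiv ℝ F (c s) w)
      (fderiv ℝ (fderiv ℝ F) (c t) vel w) t := by
  have hF' : ContDiffOn ℝ 1 (fderiv ℝ F) V := hF.fderiv_of_isOpen hV (by norm_num)
  have hdiff : DifferentiableAt ℝ (fderiv ℝ F) (c t) :=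
    (hF'.differentiableOn one_ne_zero).differentiableAt (hV.mem_nhds hp)
  have h1 : HasDerivAt (fun s => fderiv ℝ F (c s))
      (fderiv ℝ (fderiv ℝ F) (c t) vel) t :=
    hdiff.hasFDerivAt.comp_hasDerivAt t hc
  simpa using h1.clm_apply (hasDerivAt_const t w)

lemma snd_symm {V : Set (ℝ × ℝ)} (hV : IsOpen V) {F : ℝ × ℝ → ℝ}
    (hF : ContDiffOn ℝ 2 F V) {p : ℝ × ℝ} (hp : p ∈ V) (v w : ℝ × ℝ) :
    fderiv ℝ (fderiv ℝ F) p v w = fderiv ℝ (fderiv ℝ F) p w v := by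
  have hF' : ContDiffOn ℝ 1 (fderiv ℝ F) V := hF.fderiv_of_isOpen hV (by norm_num)
  have hdiff : DifferentiableAt ℝ (fderiv ℝ F) p :=
    (hF'.differentiableOn one_ne_zero).differentiableAt (hV.mem_nhds hp)
  have hev : ∀ᶠ y in nhds p, HasFDerivAt F (fderiv ℝ F y) y := by
    filter_upwards [hV.mem_nhds hp] with y hy
    exact ((hF.differentiableOn (by norm_num)).differentiableAt
      (hV.mem_nhds hy)).hasFDerivAt
  exact second_derivative_symmetric_of_eventually hev hdiff.hasFDerivAt v w

lemma hasDerivAt_line (p w : ℝ × ℝ) :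
    HasDerivAt (fun s : ℝ => p + s • w) w 0 := by
  simpa using ((hasDerivAt_id (0:ℝ)).smul_const w).const_add p

lemma line_fderiv {V : Set (ℝ × ℝ)} (hV : IsOpen V) {F : ℝ × ℝ → ℝ}
    (hF : ContDiffOn ℝ 2 F V) {p : ℝ × ℝ} (hp : p ∈ V) (w v : ℝ × ℝ) :
    HasDerivAt (fun s : ℝ => fderiv ℝ F (p + s • w) v)
      (fderiv ℝ (fderiv ℝ F) p w v) 0 := by
  have := curve_fderiv hV hF (hasDerivAt_line p w) (by simpa using hp) v
  simpa using this

lemma line_comp1 {V : Set (ℝ × ℝ)} (hV : IsOpen V) {R : ℝ × ℝ → ℝ}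
    (hR : ContDiffOn ℝ 1 R V) {p : ℝ × ℝ} (hp : p ∈ V) (w : ℝ × ℝ) :
    HasDerivAt (fun s : ℝ => R (p + s • w)) (fderiv ℝ R p w) 0 := by
  have := curve_comp1 hV hR (hasDerivAt_line p w) (by simpa using hp)
  simpa using this

lemma diff_identity {V : Set (ℝ × ℝ)} (hV : IsOpen V) {F G A R S P : ℝ × ℝ → ℝ}
    (hF : ContDiffOn ℝ 2 F V) (hG : ContDiffOn ℝ 2 G V) (hA : ContDiffOn ℝ 2 A V)
    (hR : ContDiffOn ℝ 1 R V) (hS : ContDiffOn ℝ 1 S V) (hP : ContDiff ℝ 1 P)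
    (hid : ∀ p ∈ V, fderiv ℝ A p (1, 0) * R p + fderiv ℝ A p (0, 1) * S p
      = P (F p, G p))
    {p : ℝ × ℝ} (hp : p ∈ V) (w : ℝ × ℝ) :
    fderiv ℝ (fderiv ℝ A) p w (1, 0) * R p + fderiv ℝ A p (1, 0) * fderiv ℝ R p w
      + (fderiv ℝ (fderiv ℝ A) p w (0, 1) * S p
        + fderiv ℝ A p (0, 1) * fderiv ℝ S p w)
      = fderiv ℝ P (F p, G p) (fderiv ℝ F p w, fderiv ℝ G p w) := by
  have lhs : HasDerivAt
      (fun s : ℝ => fderiv ℝ A (p + s • w) (1, 0) * R (p + s • w)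
        + fderiv ℝ A (p + s • w) (0, 1) * S (p + s • w))
      (fderiv ℝ (fderiv ℝ A) p w (1, 0) * R p + fderiv ℝ A p (1, 0) * fderiv ℝ R p w
        + (fderiv ℝ (fderiv ℝ A) p w (0, 1) * S p
          + fderiv ℝ A p (0, 1) * fderiv ℝ S p w)) 0 := by
    have h1 := (line_fderiv hV hA hp w (1, 0)).mul (line_comp1 hV hR hp w)
    have h2 := (line_fderiv hV hA hp w (0, 1)).mul (line_comp1 hV hS hp w)
    simpa only [zero_smul, add_zero, Pi.add_def, Pi.mul_def] using h1.add h2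
  have rhs : HasDerivAt (fun s : ℝ => P (F (p + s • w), G (p + s • w)))
      (fderiv ℝ P (F p, G p) (fderiv ℝ F p w, fderiv ℝ G p w)) 0 := by
    have hpair := (line_comp1 hV (hF.of_le one_le_two) hp w).prodMk
      (line_comp1 hV (hG.of_le one_le_two) hp w)
    have hPd : HasFDerivAt P (fderiv ℝ P (F p, G p)) (F p, G p) :=
      (hP.differentiable one_ne_zero _).hasFDerivAt
    exact hPd.comp_hasDerivAt_of_eq 0 hpair (by simp)
  have hmem : ∀ᶠ s in nhds (0:ℝ), p + s • w ∈ V := by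
    have hc : Continuous (fun s : ℝ => p + s • w) := by continuity
    exact hc.continuousAt.preimage_mem_nhds (by simpa using hV.mem_nhds hp)
  have heq : (fun s : ℝ => fderiv ℝ A (p + s • w) (1, 0) * R (p + s • w)
        + fderiv ℝ A (p + s • w) (0, 1) * S (p + s • w))
      =ᶠ[nhds (0:ℝ)] (fun s : ℝ => P (F (p + s • w), G (p + s • w))) := by
    filter_upwards [hmem] with s hs using hid _ hs
  exact lhs.unique (rhs.congr_of_eventuallyEq heq)

lemma diff_identity' {V : Set (ℝ × ℝ)} (hV : IsOpen V) {F G A R S P : ℝ × ℝ → ℝ}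
    (hF : ContDiffOn ℝ 2 F V) (hG : ContDiffOn ℝ 2 G V) (hA : ContDiffOn ℝ 2 A V)
    (hR : ContDiffOn ℝ 1 R V) (hS : ContDiffOn ℝ 1 S V) (hP : ContDiff ℝ 1 P)
    (hid : ∀ p ∈ V, fderiv ℝ A p (1, 0) * R p + fderiv ℝ A p (0, 1) * S p
      = P (F p, G p))
    {p : ℝ × ℝ} (hp : p ∈ V) (x y : ℝ) :
    (x * fderiv ℝ (fderiv ℝ A) p (1, 0) (1, 0)
        + y * fderiv ℝ (fderiv ℝ A) p (0, 1) (1, 0)) * R p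
      + fderiv ℝ A p (1, 0) * (x * fderiv ℝ R p (1, 0) + y * fderiv ℝ R p (0, 1))
      + ((x * fderiv ℝ (fderiv ℝ A) p (1, 0) (0, 1)
          + y * fderiv ℝ (fderiv ℝ A) p (0, 1) (0, 1)) * S p
        + fderiv ℝ A p (0, 1) * (x * fderiv ℝ S p (1, 0) + y * fderiv ℝ S p (0, 1)))
      = (x * fderiv ℝ F p (1, 0) + y * fderiv ℝ F p (0, 1))
          * fderiv ℝ P (F p, G p) (1, 0)
        + (x * fderiv ℝ G p (1, 0) + y * fderiv ℝ G p (0, 1))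
          * fderiv ℝ P (F p, G p) (0, 1) := by
  have h := diff_identity hV hF hG hA hR hS hP hid hp (x, y)
  rw [clm2_expand (fderiv ℝ (fderiv ℝ A) p) x y (1, 0),
      clm2_expand (fderiv ℝ (fderiv ℝ A) p) x y (0, 1),
      clm_expand (fderiv ℝ R p) x y, clm_expand (fderiv ℝ S p) x y,
      clm_expand (fderiv ℝ F p) x y, clm_expand (fderiv ℝ G p) x y,
      clm_expand (fderiv ℝ P (F p, G p))] at h
  exact h


/-- The integral of the divergence along a periodic orbit is invariant under a `C²`
diffeomorphic change of variables `x = F(u,v)`, `y = G(u,v)` with nonvanishing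
Jacobian, defined on a neighborhood of the orbit. -/
theorem stmt_5 (V : Set (ℝ × ℝ)) (hV : IsOpen V)
    (P Q : ℝ × ℝ → ℝ)
    (hP : ContDiff ℝ 1 P) (hQ : ContDiff ℝ 1 Q)
    (γ : ℝ → ℝ × ℝ) (T : ℝ) (hT : 0 < T)
    (hγ : ∀ t, HasDerivAt γ (P (γ t), Q (γ t)) t)
    (hper : Function.Periodic γ T)
    (F G : ℝ × ℝ → ℝ)
    (hF : ContDiffOn ℝ 2 F V) (hG : ContDiffOn ℝ 2 G V)
    (hinj : Set.InjOn (fun p => (F p, G p)) V)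
    (J : ℝ × ℝ → ℝ)
    (hJ : ∀ p ∈ V, J p = fderiv ℝ F p (1, 0) * fderiv ℝ G p (0, 1)
      - fderiv ℝ F p (0, 1) * fderiv ℝ G p (1, 0))
    (hJ0 : ∀ p ∈ V, J p ≠ 0)
    (R S : ℝ × ℝ → ℝ)
    (hR : ContDiffOn ℝ 1 R V) (hS : ContDiffOn ℝ 1 S V)
    -- `(R,S)` is the transformed vector field, given by the chain rule
    (hRS1 : ∀ p ∈ V, fderiv ℝ F p (1, 0) * R p + fderiv ℝ F p (0, 1) * S p
      = P (F p, G p))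
    (hRS2 : ∀ p ∈ V, fderiv ℝ G p (1, 0) * R p + fderiv ℝ G p (0, 1) * S p
      = Q (F p, G p))
    -- `ϑ` is the corresponding periodic orbit in the new variables
    (ϑ : ℝ → ℝ × ℝ)
    (hϑV : ∀ t, ϑ t ∈ V)
    (hϑγ : ∀ t, (F (ϑ t), G (ϑ t)) = γ t)
    (hϑ : ∀ t, HasDerivAt ϑ (R (ϑ t), S (ϑ t)) t) :
    ∫ t in (0:ℝ)..T, (fderiv ℝ P (γ t) (1, 0) + fderiv ℝ Q (γ t) (0, 1))
      = ∫ t in (0:ℝ)..T, (fderiv ℝ R (ϑ t) (1, 0) + fderiv ℝ S (ϑ t) (0, 1)) := by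
  have contϑ : Continuous ϑ := by
    rw [continuous_iff_continuousAt]; exact fun t => (hϑ t).continuousAt
  have contγ : Continuous γ := by
    rw [continuous_iff_continuousAt]; exact fun t => (hγ t).continuousAt
  have hne : ∀ s : ℝ, fderiv ℝ F (ϑ s) (1, 0) * fderiv ℝ G (ϑ s) (0, 1)
      - fderiv ℝ F (ϑ s) (0, 1) * fderiv ℝ G (ϑ s) (1, 0) ≠ 0 := fun s => by
    rw [← hJ _ (hϑV s)]; exact hJ0 _ (hϑV s)
  have key : ∀ t : ℝ, HasDerivAt
      (fun s => fderiv ℝ F (ϑ s) (1, 0) * fderiv ℝ G (ϑ s) (0, 1)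
        - fderiv ℝ F (ϑ s) (0, 1) * fderiv ℝ G (ϑ s) (1, 0))
      (((fderiv ℝ P (γ t) (1, 0) + fderiv ℝ Q (γ t) (0, 1))
        - (fderiv ℝ R (ϑ t) (1, 0) + fderiv ℝ S (ϑ t) (0, 1)))
        * (fderiv ℝ F (ϑ t) (1, 0) * fderiv ℝ G (ϑ t) (0, 1)
          - fderiv ℝ F (ϑ t) (0, 1) * fderiv ℝ G (ϑ t) (1, 0))) t := by
    intro t
    have hpV := hϑV t
    have hFe1 := curve_fderiv hV hF (hϑ t) hpV (1, 0)
    have hFe2 := curve_fderiv hV hF (hϑ t) hpV (0, 1)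
    have hGe1 := curve_fderiv hV hG (hϑ t) hpV (1, 0)
    have hGe2 := curve_fderiv hV hG (hϑ t) hpV (0, 1)
    have hh : HasDerivAt
        (fun s => fderiv ℝ F (ϑ s) (1, 0) * fderiv ℝ G (ϑ s) (0, 1)
          - fderiv ℝ F (ϑ s) (0, 1) * fderiv ℝ G (ϑ s) (1, 0))
        (fderiv ℝ (fderiv ℝ F) (ϑ t) (R (ϑ t), S (ϑ t)) (1, 0) * fderiv ℝ G (ϑ t) (0, 1)
          + fderiv ℝ F (ϑ t) (1, 0) * fderiv ℝ (fderiv ℝ G) (ϑ t) (R (ϑ t), S (ϑ t)) (0, 1)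
          - (fderiv ℝ (fderiv ℝ F) (ϑ t) (R (ϑ t), S (ϑ t)) (0, 1) * fderiv ℝ G (ϑ t) (1, 0)
            + fderiv ℝ F (ϑ t) (0, 1)
              * fderiv ℝ (fderiv ℝ G) (ϑ t) (R (ϑ t), S (ϑ t)) (1, 0))) t :=
      (hFe1.mul hGe2).sub (hFe2.mul hGe1)
    have E1 := diff_identity' hV hF hG hF hR hS hP hRS1 hpV
      (fderiv ℝ G (ϑ t) (0, 1)) (-(fderiv ℝ G (ϑ t) (1, 0)))
    have E2 := diff_identity' hV hF hG hG hR hS hQ hRS2 hpV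
      (-(fderiv ℝ F (ϑ t) (0, 1))) (fderiv ℝ F (ϑ t) (1, 0))
    rw [hϑγ t] at E1 E2
    have symF := snd_symm hV hF hpV (1, 0) (0, 1)
    have symG := snd_symm hV hG hpV (1, 0) (0, 1)
    have hval : fderiv ℝ (fderiv ℝ F) (ϑ t) (R (ϑ t), S (ϑ t)) (1, 0) * fderiv ℝ G (ϑ t) (0, 1)
          + fderiv ℝ F (ϑ t) (1, 0) * fderiv ℝ (fderiv ℝ G) (ϑ t) (R (ϑ t), S (ϑ t)) (0, 1)
          - (fderiv ℝ (fderiv ℝ F) (ϑ t) (R (ϑ t), S (ϑ t)) (0, 1) * fderiv ℝ G (ϑ t) (1, 0)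
            + fderiv ℝ F (ϑ t) (0, 1)
              * fderiv ℝ (fderiv ℝ G) (ϑ t) (R (ϑ t), S (ϑ t)) (1, 0))
        = ((fderiv ℝ P (γ t) (1, 0) + fderiv ℝ Q (γ t) (0, 1))
            - (fderiv ℝ R (ϑ t) (1, 0) + fderiv ℝ S (ϑ t) (0, 1)))
          * (fderiv ℝ F (ϑ t) (1, 0) * fderiv ℝ G (ϑ t) (0, 1)
            - fderiv ℝ F (ϑ t) (0, 1) * fderiv ℝ G (ϑ t) (1, 0)) := by
      rw [clm2_expand (fderiv ℝ (fderiv ℝ F) (ϑ t)) (R (ϑ t)) (S (ϑ t)) (1, 0),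
          clm2_expand (fderiv ℝ (fderiv ℝ F) (ϑ t)) (R (ϑ t)) (S (ϑ t)) (0, 1),
          clm2_expand (fderiv ℝ (fderiv ℝ G) (ϑ t)) (R (ϑ t)) (S (ϑ t)) (1, 0),
          clm2_expand (fderiv ℝ (fderiv ℝ G) (ϑ t)) (R (ϑ t)) (S (ϑ t)) (0, 1)]
      linear_combination E1 + E2
        - (fderiv ℝ G (ϑ t) (1, 0) * R (ϑ t) + fderiv ℝ G (ϑ t) (0, 1) * S (ϑ t)) * symF
        + (fderiv ℝ F (ϑ t) (1, 0) * R (ϑ t) + fderiv ℝ F (ϑ t) (0, 1) * S (ϑ t)) * symG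
    exact hval ▸ hh
  have keylog : ∀ t : ℝ, HasDerivAt
      (fun s => Real.log (fderiv ℝ F (ϑ s) (1, 0) * fderiv ℝ G (ϑ s) (0, 1)
        - fderiv ℝ F (ϑ s) (0, 1) * fderiv ℝ G (ϑ s) (1, 0)))
      ((fderiv ℝ P (γ t) (1, 0) + fderiv ℝ Q (γ t) (0, 1))
        - (fderiv ℝ R (ϑ t) (1, 0) + fderiv ℝ S (ϑ t) (0, 1))) t := fun t => by
    have := (key t).log (hne t)
    simpa [mul_div_cancel_right₀ _ (hne t)] using this
  have hcont1 : Continuous (fun t => fderiv ℝ P (γ t) (1, 0) + fderiv ℝ Q (γ t) (0, 1)) :=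
    (((hP.continuous_fderiv one_ne_zero).comp contγ).clm_apply continuous_const).add
      (((hQ.continuous_fderiv one_ne_zero).comp contγ).clm_apply continuous_const)
  have hcont2 : Continuous (fun t => fderiv ℝ R (ϑ t) (1, 0) + fderiv ℝ S (ϑ t) (0, 1)) := by
    have cR : ContinuousOn (fderiv ℝ R) V := hR.continuousOn_fderiv_of_isOpen hV le_rfl
    have cS : ContinuousOn (fderiv ℝ S) V := hS.continuousOn_fderiv_of_isOpen hV le_rfl
    exact ((cR.comp_continuous contϑ hϑV).clm_apply continuous_const).add
      ((cS.comp_continuous contϑ hϑV).clm_apply continuous_const)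
  have hFTC : ∫ t in (0:ℝ)..T,
      ((fderiv ℝ P (γ t) (1, 0) + fderiv ℝ Q (γ t) (0, 1))
        - (fderiv ℝ R (ϑ t) (1, 0) + fderiv ℝ S (ϑ t) (0, 1)))
      = Real.log (fderiv ℝ F (ϑ T) (1, 0) * fderiv ℝ G (ϑ T) (0, 1)
          - fderiv ℝ F (ϑ T) (0, 1) * fderiv ℝ G (ϑ T) (1, 0))
        - Real.log (fderiv ℝ F (ϑ 0) (1, 0) * fderiv ℝ G (ϑ 0) (0, 1)
          - fderiv ℝ F (ϑ 0) (0, 1) * fderiv ℝ G (ϑ 0) (1, 0)) :=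
    intervalIntegral.integral_eq_sub_of_hasDerivAt (fun t _ => keylog t)
      ((hcont1.sub hcont2).intervalIntegrable 0 T)
  have hϑT : ϑ T = ϑ 0 := by
    apply hinj (hϑV T) (hϑV 0)
    show (F (ϑ T), G (ϑ T)) = (F (ϑ 0), G (ϑ 0))
    rw [hϑγ, hϑγ]
    simpa using hper 0
  rw [hϑT, sub_self] at hFTC
  rw [intervalIntegral.integral_sub (hcont1.intervalIntegrable 0 T)
    (hcont2.intervalIntegrable 0 T)] at hFTC
  linarith [hFTC]
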